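/- A 3-element set A belonging to P_fin,0(ℕ) fails to be an atom of P_fin,0(ℕ) if and only if A = {0, x, 2x} for some integer x ≥ 1. -/
import Mathlib


open Pointwise

/-- `A` is an atom of the restricted power monoid `P_fin,0(ℕ)` of finite subsets of `ℕ`
containing `0`, under set addition. -/
def IsAtom0 (A : Finset ℕ) : Prop :=
  0 ∈ A ∧ A ≠ {0} ∧
    ∀ X Y : Finset ℕ, 0 ∈ X → 0 ∈ Y → A = X + Y → X = {0} ∨ Y = {0}

/-- A 3-element set `A ∈ P_fin,0(ℕ)` fails to be an atom of `P_fin,0(ℕ)` if and only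
if `A = {0, x, 2x}` for some `x ≥ 1`. -/
theorem stmt_12 (A : Finset ℕ) (h0 : 0 ∈ A) (hcard : A.card = 3) :
    ¬ IsAtom0 A ↔ ∃ x : ℕ, 1 ≤ x ∧ A = {0, x, 2 * x} := by
  have hA1 : A ≠ {0} := by
    intro h; rw [h] at hcard; simp at hcard
  constructor
  · intro hna
    rw [IsAtom0] at hna
    push_neg at hna
    obtain ⟨X, Y, hX0, hY0, hXY, hXne, hYne⟩ := hna h0 hA1
    -- get a nonzero element of X
    have hXa : ∃ a ∈ X, a ≠ 0 := by
      by_contra h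
      push_neg at h
      apply hXne
      apply Finset.Subset.antisymm
      · intro c hc; simp [h c hc]
      · simpa using hX0
    have hYb : ∃ b ∈ Y, b ≠ 0 := by
      by_contra h
      push_neg at h
      apply hYne
      apply Finset.Subset.antisymm
      · intro c hc; simp [h c hc]
      · simpa using hY0
    obtain ⟨a, haX, ha⟩ := hXa
    obtain ⟨b, hbY, hb⟩ := hYb
    have habA : a + b ∈ A := by rw [hXY]; exact Finset.add_mem_add haX hbY
    have haA : a ∈ A := by
      rw [hXY]; simpa using Finset.add_mem_add haX hY0
    have hbA : b ∈ A := by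
      rw [hXY]; simpa using Finset.add_mem_add hX0 hbY
    have hcard3 : ({0, a, a + b} : Finset ℕ).card = 3 := by
      rw [Finset.card_insert_of_notMem (by simp; omega),
        Finset.card_insert_of_notMem (by simp; omega), Finset.card_singleton]
    have heq : A = {0, a, a + b} := by
      refine (Finset.eq_of_subset_of_card_le ?_ (by omega)).symm
      intro c hc
      simp only [Finset.mem_insert, Finset.mem_singleton] at hc
      rcases hc with rfl | rfl | rfl <;> assumption
    have hba : b = a := by
      rw [heq] at hbA
      simp only [Finset.mem_insert, Finset.mem_singleton] at hbA
      omega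
    refine ⟨a, by omega, ?_⟩
    rw [heq, hba, two_mul]
  · rintro ⟨x, hx, rfl⟩ hat
    obtain ⟨-, -, hsplit⟩ := hat
    have hsum : ({0, x, 2 * x} : Finset ℕ) = {0, x} + {0, x} := by
      ext n
      simp only [Finset.mem_insert, Finset.mem_singleton, Finset.mem_add]
      constructor
      · rintro (h | h | h)
        · exact ⟨0, by simp, 0, by simp, by omega⟩
        · exact ⟨0, by simp, x, by simp, by omega⟩
        · exact ⟨x, by simp, x, by simp, by omega⟩
      · rintro ⟨y, hy, z, hz, rfl⟩
        omega
    rcases hsplit {0, x} {0, x} (by simp) (by simp) hsum with h | h <;>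
    · have : x ∈ ({0} : Finset ℕ) := h ▸ (by simp : x ∈ ({0, x} : Finset ℕ))
      simp at this
      omega
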